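/- arXiv:1909.04907 — 2 statements merged into one kernel-verified Lean document; each statement's English description precedes it below -/
import Mathlib

section
/- For all representations V, W of Γ and all i ≥ 0, there is an isomorphism Ext^i_Q(Φ(V), Φ(W)) ≅ Ext^i_Γ(V, W), where Ext_Q denotes Ext in the category Rep⁰(Γ̂_d) ≅ mod(Q). -/
/-!
Representations of a quiver `Γ` are modelled as functors `Paths Γ ⥤ ModuleCat ℂ`.
The category `Rep⁰(Γ̂_d) ≅ mod(Q)`, `Q = ℂΓ ⊗ ℂL_d`, of representations of the extended
quiver `Γ̂_d` satisfying the commutativity relations, is modelled as the functor category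
`Paths Γ × Paths (L_d) ⥤ ModuleCat ℂ`.
-/

open CategoryTheory CategoryTheory.Limits

/-- The linear quiver `L_d` with `d` vertices and one arrow `r → r+1` for each `r`. -/
structure Ld (d : ℕ) where
  val : Fin d

instance (d : ℕ) : Quiver (Ld d) := ⟨fun a b => PLift (a.val.1 + 1 = b.val.1)⟩

/-- The category of representations of the quiver `Γ`. -/
abbrev RepCat (Γ : Type) [Quiver.{1} Γ] : Type 1 := Paths Γ ⥤ ModuleCat.{0} ℂ

/-- The category `Rep⁰(Γ̂_d) ≅ mod(Q)` of commutative-square representations of the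
extended quiver `Γ̂_d`. -/
abbrev Rep0Cat (Γ : Type) [Quiver.{1} Γ] (d : ℕ) : Type 1 :=
  Paths Γ × Paths (Ld d) ⥤ ModuleCat.{0} ℂ

/-- The functor `Φ : Rep(Γ) → Rep⁰(Γ̂_d)`: `Φ(V)_{(i,r)} = V_i`, with the structure maps of
`V` on each level `r` and identity transition maps between consecutive levels. -/
noncomputable def Phi (Γ : Type) [Quiver.{1} Γ] (d : ℕ) : RepCat Γ ⥤ Rep0Cat Γ d :=
  (Functor.whiskeringLeft (Paths Γ × Paths (Ld d)) (Paths Γ) (ModuleCat.{0} ℂ)).obj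
    (CategoryTheory.Prod.fst (Paths Γ) (Paths (Ld d)))

namespace S3

variable {d : ℕ}

lemma le_of_path : ∀ {a b : Ld d} (_ : Quiver.Path a b), a.val.1 ≤ b.val.1 := by
  intro a b p
  induction p with
  | nil => exact le_refl _
  | cons p e ih => have := e.down; omega

lemma Ld.ext' {x y : Ld d} (h : x.val.1 = y.val.1) : x = y := by
  cases x with | mk xv => cases y with | mk yv =>
  cases xv; cases yv; simp at h; subst h; rfl

lemma path_eq {a : Ld d} : ∀ {b : Ld d} (p q : Quiver.Path a b), p = q := by
  intro b p
  induction p with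
  | nil =>
    intro q
    cases q with
    | nil => rfl
    | cons q e => exfalso; have h1 := le_of_path q; have := e.down; omega
  | @cons x b p e ih =>
    intro q
    cases q with
    | nil => exfalso; have h1 := le_of_path p; have := e.down; omega
    | @cons y _ q f =>
      obtain rfl : y = x := Ld.ext' (by have := e.down; have := f.down; omega)
      change PLift _ at e f
      cases e; cases f
      rw [ih q]

instance (a b : Paths (Ld d)) : Subsingleton (a ⟶ b) := ⟨path_eq⟩

/-- The unique path from the initial vertex. -/
def pathAux (hd : 0 < d) : ∀ (k : ℕ) (h : k < d),
    Quiver.Path (⟨⟨0, hd⟩⟩ : Ld d) (⟨⟨k, h⟩⟩ : Ld d)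
  | 0, _ => Quiver.Path.nil
  | (k+1), h => (pathAux hd k (by omega)).cons ⟨rfl⟩

def pathFromZero (hd : 0 < d) : ∀ (b : Ld d), Quiver.Path (⟨⟨0, hd⟩⟩ : Ld d) b
  | ⟨⟨k, h⟩⟩ => pathAux hd k h

/-- additivity of precomposition functors -/
instance whiskeringLeftObjAdditive (C D E : Type*) [Category C] [Category D] [Category E]
    [Preadditive E] (F : C ⥤ D) : ((Functor.whiskeringLeft C D E).obj F).Additive where
  map_add := by intros; ext; simp

noncomputable instance whiskeringLeftObjPFL (C D E : Type*) [Category C] [Category D]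
    [Category.{0} E] [HasLimitsOfSize.{0,0} E] (F : C ⥤ D) :
    PreservesFiniteLimits ((Functor.whiskeringLeft C D E).obj F) :=
  ⟨fun _ _ _ => inferInstance⟩

noncomputable instance whiskeringLeftObjPFC (C D E : Type*) [Category C] [Category D]
    [Category.{0} E] [HasColimitsOfSize.{0,0} E] (F : C ⥤ D) :
    PreservesFiniteColimits ((Functor.whiskeringLeft C D E).obj F) :=
  ⟨fun _ _ _ => inferInstance⟩

/-- The adjunction induced on categories of homological complexes by an adjunction
between additive functors. -/
noncomputable def mapHCAdj {A B : Type*} [Category A] [Category B] [Preadditive A]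
    [Preadditive B] {ι : Type*} {F : A ⥤ B} {G : B ⥤ A} [F.Additive] [G.Additive]
    (adj : F ⊣ G) (c : ComplexShape ι) :
    F.mapHomologicalComplex c ⊣ G.mapHomologicalComplex c where
  unit :=
    { app := fun K =>
        { f := fun i => adj.unit.app (K.X i)
          comm' := fun i j _ => by
            have := adj.unit.naturality (K.d i j)
            dsimp at this ⊢
            exact this.symm }
      naturality := fun K L φ => by
        ext i
        have := adj.unit.naturality (φ.f i)
        dsimp at this ⊢
        exact this }
  counit :=
    { app := fun K =>
        { f := fun i => adj.counit.app (K.X i)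
          comm' := fun i j _ => by
            have := adj.counit.naturality (K.d i j)
            dsimp at this ⊢
            exact this.symm }
      naturality := fun K L φ => by
        ext i
        have := adj.counit.naturality (φ.f i)
        dsimp at this ⊢
        exact this }
  left_triangle_components K := by
    ext i
    exact adj.left_triangle_components (K.X i)
  right_triangle_components K := by
    ext i
    exact adj.right_triangle_components (K.X i)

lemma mapHCAdj_unit_app_f {A B : Type*} [Category A] [Category B] [Preadditive A]
    [Preadditive B] {ι : Type*} {F : A ⥤ B} {G : B ⥤ A} [F.Additive] [G.Additive]
    (adj : F ⊣ G) (c : ComplexShape ι) (K : HomologicalComplex A c) (i : ι) :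
    ((mapHCAdj adj c).unit.app K).f i = adj.unit.app (K.X i) := rfl

/-- conjugation by isomorphisms, as an `AddEquiv` -/
noncomputable def homAddCongr {C : Type*} [Category C] [Preadditive C] {X Y X' Y' : C}
    (e1 : X ≅ X') (e2 : Y ≅ Y') : (X ⟶ Y) ≃+ (X' ⟶ Y') :=
  { e1.homCongr e2 with
    map_add' := fun _ _ => by simp [Iso.homCongr] }

/-- the hom-equivalence of a fully faithful additive functor, as an `AddEquiv` -/
noncomputable def ffAddEquiv {C D : Type*} [Category C] [Category D] [Preadditive C]
    [Preadditive D] {F : C ⥤ D} [F.Additive] (hF : F.FullyFaithful) (X Y : C) :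
    (X ⟶ Y) ≃+ (F.obj X ⟶ F.obj Y) :=
  { hF.homEquiv with
    map_add' := fun _ _ => F.map_add }

section Main

variable (Γ : Type) [Quiver.{1} Γ] (hd : 0 < d)

/-- The initial vertex of `Paths (Ld d)`. -/
def t0 : Paths (Ld d) := ⟨⟨0, hd⟩⟩

/-- The functor `c ↦ (c, 0)`. -/
def iota : Paths Γ ⥤ Paths Γ × Paths (Ld d) where
  obj c := (c, t0 hd)
  map f := (f, 𝟙 _)

/-- `iota` is left adjoint to the first projection, since `0` is initial. -/
def adj0 : iota Γ hd ⊣ CategoryTheory.Prod.fst (Paths Γ) (Paths (Ld d)) where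
  unit := { app := fun c => 𝟙 c, naturality := by intros; dsimp [iota]; simp }
  counit :=
    { app := fun x => (𝟙 x.1, pathFromZero hd x.2)
      naturality := fun x y f => by
        dsimp [iota]
        ext
        · simp
        · exact Subsingleton.elim _ _ }
  left_triangle_components c := by
    dsimp [iota]
    ext
    · simp
    · exact Subsingleton.elim _ _
  right_triangle_components x := by dsimp [iota]; simp

@[simp] lemma adj0_unit_app (c : Paths Γ) : (adj0 Γ hd).unit.app c = 𝟙 c := rfl

/-- The right adjoint of `Phi`, given by precomposition with `iota`. -/
noncomputable def RFun : (Paths Γ × Paths (Ld d) ⥤ ModuleCat.{0} ℂ) ⥤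
    (Paths Γ ⥤ ModuleCat.{0} ℂ) :=
  (Functor.whiskeringLeft (Paths Γ) (Paths Γ × Paths (Ld d)) (ModuleCat.{0} ℂ)).obj (iota Γ hd)

/-- The adjunction `Phi ⊣ RFun`. -/
noncomputable def adjAB : Phi Γ d ⊣ RFun Γ hd :=
  Adjunction.whiskerLeft (ModuleCat.{0} ℂ) (adj0 Γ hd)

lemma adjAB_unit_app (V : Paths Γ ⥤ ModuleCat.{0} ℂ) :
    (adjAB Γ hd).unit.app V = 𝟙 V := by
  ext c
  simp [adjAB, Phi]
  rename_i x
  exact congrArg (fun f => ModuleCat.Hom.hom f x) (V.map_id c)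

instance (V : Paths Γ ⥤ ModuleCat.{0} ℂ) : IsIso ((adjAB Γ hd).unit.app V) := by
  rw [adjAB_unit_app]; exact inferInstanceAs (IsIso (𝟙 V))

variable (d) in
instance phiAdditive : (Phi Γ d).Additive :=
  inferInstanceAs (((Functor.whiskeringLeft (Paths Γ × Paths (Ld d)) (Paths Γ)
    (ModuleCat.{0} ℂ)).obj (CategoryTheory.Prod.fst (Paths Γ) (Paths (Ld d)))).Additive)

variable (d) in
noncomputable instance phiPFL : PreservesFiniteLimits (Phi Γ d) :=
  inferInstanceAs (PreservesFiniteLimits ((Functor.whiskeringLeft (Paths Γ × Paths (Ld d)) (Paths Γ)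
    (ModuleCat.{0} ℂ)).obj (CategoryTheory.Prod.fst (Paths Γ) (Paths (Ld d)))))

variable (d) in
noncomputable instance phiPFC : PreservesFiniteColimits (Phi Γ d) :=
  inferInstanceAs (PreservesFiniteColimits ((Functor.whiskeringLeft (Paths Γ × Paths (Ld d)) (Paths Γ)
    (ModuleCat.{0} ℂ)).obj (CategoryTheory.Prod.fst (Paths Γ) (Paths (Ld d)))))

instance rAdditive : (RFun Γ hd).Additive :=
  inferInstanceAs (((Functor.whiskeringLeft (Paths Γ) (Paths Γ × Paths (Ld d))
    (ModuleCat.{0} ℂ)).obj (iota Γ hd)).Additive)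

noncomputable instance rPFL : PreservesFiniteLimits (RFun Γ hd) :=
  inferInstanceAs (PreservesFiniteLimits ((Functor.whiskeringLeft (Paths Γ) (Paths Γ × Paths (Ld d))
    (ModuleCat.{0} ℂ)).obj (iota Γ hd)))

noncomputable instance rPFC : PreservesFiniteColimits (RFun Γ hd) :=
  inferInstanceAs (PreservesFiniteColimits ((Functor.whiskeringLeft (Paths Γ) (Paths Γ × Paths (Ld d))
    (ModuleCat.{0} ℂ)).obj (iota Γ hd)))

section Derived

universe w1 w2 u1 u2

variable [HasDerivedCategory.{w1} (Paths Γ ⥤ ModuleCat.{0} ℂ)]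
  [HasDerivedCategory.{w2} (Paths Γ × Paths (Ld d) ⥤ ModuleCat.{0} ℂ)]

/-- the derived functor of `Phi` -/
noncomputable def PhiD : DerivedCategory (Paths Γ ⥤ ModuleCat.{0} ℂ) ⥤
    DerivedCategory (Paths Γ × Paths (Ld d) ⥤ ModuleCat.{0} ℂ) :=
  (Phi Γ d).mapDerivedCategory

/-- the derived functor of `RFun` -/
noncomputable def RD : DerivedCategory (Paths Γ × Paths (Ld d) ⥤ ModuleCat.{0} ℂ) ⥤
    DerivedCategory (Paths Γ ⥤ ModuleCat.{0} ℂ) :=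
  (RFun Γ hd).mapDerivedCategory

noncomputable instance sq1 :
    CatCommSq ((Phi Γ d).mapHomologicalComplex (ComplexShape.up ℤ))
      DerivedCategory.Q DerivedCategory.Q (PhiD Γ (d := d)) :=
  ⟨(Phi Γ d).mapDerivedCategoryFactors.symm⟩

noncomputable instance sq2 :
    CatCommSq ((RFun Γ hd).mapHomologicalComplex (ComplexShape.up ℤ))
      DerivedCategory.Q DerivedCategory.Q (RD Γ hd) :=
  ⟨(RFun Γ hd).mapDerivedCategoryFactors.symm⟩

/-- the complex-level adjunction -/
noncomputable def adjC :
    (Phi Γ d).mapHomologicalComplex (ComplexShape.up ℤ) ⊣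
      (RFun Γ hd).mapHomologicalComplex (ComplexShape.up ℤ) :=
  mapHCAdj (adjAB Γ hd) (ComplexShape.up ℤ)

instance adjC_unit_iso (K : CochainComplex (Paths Γ ⥤ ModuleCat.{0} ℂ) ℤ) :
    IsIso ((adjC Γ hd).unit.app K) := by
  have : ∀ n : ℤ, IsIso (((adjC Γ hd).unit.app K).f n) := fun n =>
    inferInstanceAs (IsIso ((adjAB Γ hd).unit.app (K.X n)))
  exact HomologicalComplex.Hom.isIso_of_components _

/-- the derived adjunction -/
noncomputable def adjD : PhiD Γ (d := d) ⊣ RD Γ hd :=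
  (adjC Γ hd).localization DerivedCategory.Q
    (HomologicalComplex.quasiIso _ (ComplexShape.up ℤ))
    DerivedCategory.Q
    (HomologicalComplex.quasiIso _ (ComplexShape.up ℤ))
    (PhiD Γ (d := d)) (RD Γ hd)

instance adjD_unit_iso : IsIso (adjD Γ hd).unit := by
  have h : ∀ X, IsIso ((adjD Γ hd).unit.app X) := by
    intro X
    letI : DerivedCategory.Q
        (C := Paths Γ ⥤ ModuleCat.{0} ℂ).EssSurj :=
      Localization.essSurj _ (HomologicalComplex.quasiIso _ (ComplexShape.up ℤ))
    let K := DerivedCategory.Q.objPreimage X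
    let e : DerivedCategory.Q.obj K ≅ X := DerivedCategory.Q.objObjPreimageIso X
    have hK : IsIso ((adjD Γ hd).unit.app (DerivedCategory.Q.obj K)) := by
      unfold adjD
      rw [Adjunction.localization_unit_app]
      infer_instance
    have heq : (adjD Γ hd).unit.app X =
        e.inv ≫ (adjD Γ hd).unit.app (DerivedCategory.Q.obj K) ≫
          (PhiD Γ (d := d) ⋙ RD Γ hd).map e.hom := by
      rw [← (adjD Γ hd).unit.naturality e.hom]
      simp
    rw [heq]
    infer_instance
  exact NatIso.isIso_of_isIso_app _

/-- the derived functor of `Phi` is fully faithful -/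
noncomputable def PhiDFF : (PhiD Γ (d := d)).FullyFaithful :=
  (adjD Γ hd).fullyFaithfulLOfIsIsoUnit

noncomputable instance : (PhiD Γ (d := d)).CommShift ℤ :=
  inferInstanceAs ((Phi Γ d).mapDerivedCategory.CommShift ℤ)

instance : (PhiD Γ (d := d)).IsTriangulated :=
  inferInstanceAs ((Phi Γ d).mapDerivedCategory.IsTriangulated)

noncomputable def singleIsoA :
    DerivedCategory.singleFunctor (Paths Γ ⥤ ModuleCat.{0} ℂ) 0 ≅
      HomologicalComplex.single (Paths Γ ⥤ ModuleCat.{0} ℂ) (ComplexShape.up ℤ) 0 ⋙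
        DerivedCategory.Q :=
  (SingleFunctors.evaluation _ _ (0 : ℤ)).mapIso
    (DerivedCategory.singleFunctorsPostcompQIso (Paths Γ ⥤ ModuleCat.{0} ℂ))

noncomputable def singleIsoB :
    DerivedCategory.singleFunctor (Paths Γ × Paths (Ld d) ⥤ ModuleCat.{0} ℂ) 0 ≅
      HomologicalComplex.single (Paths Γ × Paths (Ld d) ⥤ ModuleCat.{0} ℂ)
        (ComplexShape.up ℤ) 0 ⋙ DerivedCategory.Q :=
  (SingleFunctors.evaluation _ _ (0 : ℤ)).mapIso
    (DerivedCategory.singleFunctorsPostcompQIso (Paths Γ × Paths (Ld d) ⥤ ModuleCat.{0} ℂ))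

/-- compatibility of `PhiD` with the single functors -/
noncomputable def eSingle (V : Paths Γ ⥤ ModuleCat.{0} ℂ) :
    (DerivedCategory.singleFunctor _ 0).obj ((Phi Γ d).obj V) ≅
      (PhiD Γ (d := d)).obj ((DerivedCategory.singleFunctor _ 0).obj V) :=
  (singleIsoB Γ (d := d)).app ((Phi Γ d).obj V) ≪≫
    DerivedCategory.Q.mapIso
      ((HomologicalComplex.singleMapHomologicalComplex (Phi Γ d)
        (ComplexShape.up ℤ) 0).symm.app V) ≪≫
    ((Phi Γ d).mapDerivedCategoryFactors.symm.app
      ((HomologicalComplex.single _ (ComplexShape.up ℤ) 0).obj V)) ≪≫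
    (PhiD Γ (d := d)).mapIso ((singleIsoA Γ).symm.app V)

/-- The comparison of Ext groups. -/
noncomputable def extAddEquiv (V W : Paths Γ ⥤ ModuleCat.{0} ℂ) (n : ℕ)
    [HasExt.{u1} (Paths Γ ⥤ ModuleCat.{0} ℂ)]
    [HasExt.{u2} (Paths Γ × Paths (Ld d) ⥤ ModuleCat.{0} ℂ)] :
    Abelian.Ext ((Phi Γ d).obj V) ((Phi Γ d).obj W) n ≃+ Abelian.Ext V W n :=
  Abelian.Ext.homAddEquiv.trans
    ((homAddCongr (eSingle Γ (d := d) V)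
        ((shiftFunctor _ (n : ℤ)).mapIso (eSingle Γ (d := d) W) ≪≫
          (((PhiD Γ (d := d)).commShiftIso (n : ℤ)).app
            ((DerivedCategory.singleFunctor _ 0).obj W)).symm)).trans
      (((ffAddEquiv (PhiDFF Γ hd) _ _).symm).trans Abelian.Ext.homAddEquiv.symm))

end Derived

end Main

end S3

/-- For all representations `V, W` of `Γ` and all `i ≥ 0`, there is an
isomorphism `Ext^i_Q(Φ(V), Φ(W)) ≅ Ext^i_Γ(V, W)` (of abelian groups). -/
theorem statement3 (Γ : Type) [Quiver.{1} Γ] [Fintype Γ] [∀ a b : Γ, Fintype (a ⟶ b)]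
    (d : ℕ) (hd : 0 < d) (V W : RepCat Γ) (i : ℕ) :
    letI := HasDerivedCategory.standard (RepCat Γ)
    letI := hasExt_of_hasDerivedCategory (RepCat Γ)
    letI := HasDerivedCategory.standard (Rep0Cat Γ d)
    letI := hasExt_of_hasDerivedCategory (Rep0Cat Γ d)
    Nonempty (Abelian.Ext ((Phi Γ d).obj V) ((Phi Γ d).obj W) i ≃+ Abelian.Ext V W i) := by
  letI := HasDerivedCategory.standard (RepCat Γ)
  letI := hasExt_of_hasDerivedCategory (RepCat Γ)
  letI := HasDerivedCategory.standard (Rep0Cat Γ d)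
  letI := hasExt_of_hasDerivedCategory (Rep0Cat Γ d)
  exact ⟨S3.extAddEquiv Γ hd V W i⟩
end

section
/- Let 0 → V → U → W → 0 be a split short exact sequence of representations of a finite quiver Γ (e.g., Ext¹_Γ(W,V) = 0), and fix flag types 𝐯, 𝐰 for V and W. For fixed flags (V^r)_r ∈ ℱ_𝐯(V) and (W^r)_r ∈ ℱ_𝐰(W), the fiber of the map ℱ_{𝐯,𝐰}(U) → ℱ_𝐯(V) × ℱ_𝐰(W), φ ↦ (φ ∩ V, π(φ)), over ((V^r), (W^r)) is in natural bijection with the set of families of Γ-morphisms f_r: W^r → V/V^r for r ∈ [1;d] such that for each r ∈ [1;d-1] the square with the inclusions W^r → W^{r+1} and the projections V/V^r → V/V^{r+1} commutes. -/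
open Module

/-! Concrete model of quiver representations over `ℂ`. -/

/-- A quiver with vertex set `I` and arrow set `H`; `src`/`tgt` give the source and
target of each arrow. -/
structure FinQuiver (I H : Type) where
  src : H → I
  tgt : H → I

/-- A finite-dimensional complex representation of the quiver `Q`. -/
structure MRep {I H : Type} (Q : FinQuiver I H) where
  M : I → Type
  [acg : ∀ i, AddCommGroup (M i)]
  [mod : ∀ i, Module ℂ (M i)]
  [fd : ∀ i, FiniteDimensional ℂ (M i)]
  map : ∀ h, M (Q.src h) →ₗ[ℂ] M (Q.tgt h)

attribute [instance] MRep.acg MRep.mod MRep.fd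

/-- A family of subspaces is a subrepresentation if it is preserved by all arrow maps. -/
def IsSubrep {I H : Type} {Q : FinQuiver I H} (V : MRep Q)
    (S : ∀ i, Submodule ℂ (V.M i)) : Prop :=
  ∀ h x, x ∈ S (Q.src h) → V.map h x ∈ S (Q.tgt h)

/-- The flag version of the quiver Grassmannian: chains
`V¹ ⊆ V² ⊆ ⋯ ⊆ V^{d+1} = V` of subrepresentations of `V` with prescribed dimension
vectors `dims r`. -/
def FlagVar {I H : Type} {Q : FinQuiver I H} (V : MRep Q) {d : ℕ}
    (dims : Fin (d + 1) → I → ℕ) : Type :=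
  {F : Fin (d + 1) → ∀ i, Submodule ℂ (V.M i) //
    (∀ r, IsSubrep V (F r)) ∧
    (∀ r r' : Fin (d + 1), r ≤ r' → ∀ i, F r i ≤ F r' i) ∧
    (∀ r i, finrank ℂ (F r i) = dims r i) ∧
    (∀ i, F (Fin.last d) i = ⊤)}

/-- The classical topology on the set of subspaces of a finite-dimensional complex vector
space (the disjoint union of the Grassmannians), induced by identifying a subspace with
the orthogonal projection onto its image in a euclidean coordinate space. -/
noncomputable instance submoduleTopology (M : Type) [AddCommGroup M] [Module ℂ M]
    [FiniteDimensional ℂ M] : TopologicalSpace (Submodule ℂ M) :=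
  TopologicalSpace.induced
    (fun K =>
      let e : M ≃ₗ[ℂ] EuclideanSpace ℂ (Fin (finrank ℂ M)) :=
        (Module.finBasis ℂ M).equivFun.trans
          (WithLp.linearEquiv 2 ℂ (Fin (finrank ℂ M) → ℂ)).symm
      let K' : Submodule ℂ (EuclideanSpace ℂ (Fin (finrank ℂ M))) := K.map e.toLinearMap
      (K'.subtypeL.comp K'.orthogonalProjectionOnto :
        EuclideanSpace ℂ (Fin (finrank ℂ M)) →L[ℂ] EuclideanSpace ℂ (Fin (finrank ℂ M))))
    inferInstance

noncomputable instance flagVarTopology {I H : Type} {Q : FinQuiver I H} (V : MRep Q) {d : ℕ}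
    (dims : Fin (d + 1) → I → ℕ) : TopologicalSpace (FlagVar V dims) :=
  instTopologicalSpaceSubtype

/-- An α-partition into affine spaces: a finite partition `X = X₁ ⊔ ⋯ ⊔ X_n` such that
each union `X₁ ⊔ ⋯ ⊔ X_r` is closed and each part `X_r` is (homeomorphic to) an affine
space `ℂ^{m_r}`. -/
def HasAlphaPartitionIntoAffineSpaces (X : Type*) [TopologicalSpace X] : Prop :=
  ∃ (n : ℕ) (p : X → Fin n) (m : Fin n → ℕ),
    (∀ r : Fin n, IsClosed {x : X | p x ≤ r}) ∧
    (∀ r : Fin n, Nonempty ({x : X // p x = r} ≃ₜ (Fin (m r) → ℂ)))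

section Euler

variable {I H : Type} [Fintype I] [Fintype H]

/-- The Euler form `⟨a, b⟩ = ∑ᵢ aᵢ bᵢ − ∑_h a_{h'} b_{h''}` of the quiver `Q`. -/
def eulerForm (Q : FinQuiver I H) (a b : I → ℤ) : ℤ :=
  ∑ i, a i * b i - ∑ h, a (Q.src h) * b (Q.tgt h)

/-- The linear map `⊕ᵢ Hom(Wᵢ, Vᵢ) → ⊕_h Hom(W_{h'}, V_{h''})`,
`(fᵢ)ᵢ ↦ (f_{h''} ∘ W_h − V_h ∘ f_{h'})_h`, whose kernel is `Hom_Γ(W, V)` and whose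
cokernel is `Ext¹_Γ(W, V)`. -/
noncomputable def extDiff {Q : FinQuiver I H} (W V : MRep Q) :
    (∀ i, W.M i →ₗ[ℂ] V.M i) →ₗ[ℂ] (∀ h, W.M (Q.src h) →ₗ[ℂ] V.M (Q.tgt h)) :=
  LinearMap.pi fun h =>
    (LinearMap.lcomp ℂ _ (W.map h)).comp (LinearMap.proj (Q.tgt h)) -
    (LinearMap.llcomp ℂ _ _ _ (V.map h)).comp (LinearMap.proj (Q.src h))

/-- `Ext¹_Γ(W, V) = 0`, i.e. the cokernel of `extDiff W V` vanishes. -/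
def Ext1Vanishes {Q : FinQuiver I H} (W V : MRep Q) : Prop :=
  Function.Surjective (extDiff W V)

end Euler

/-- The direct sum `U = V ⊕ W` of two representations (the middle term of a split short
exact sequence `0 → V → U → W → 0`, after fixing a splitting). -/
noncomputable def prodRep {I H : Type} {Q : FinQuiver I H} (V W : MRep Q) : MRep Q where
  M i := V.M i × W.M i
  acg i := inferInstance
  mod i := inferInstance
  fd i := inferInstance
  map h := (V.map h).prodMap (W.map h)

/-- The fiber of the map `ℱ_{𝐯,𝐰}(U) → ℱ_𝐯(V) × ℱ_𝐰(W)`, `φ ↦ (φ ∩ V, π(φ))`, over a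
fixed pair of flags `(FV, FW)`: flags `φ` of `U = V ⊕ W` of type `𝐯 + 𝐰` with
`φ ∩ V = FV` (in particular `φ ∈ ℱ_{𝐯,𝐰}(U)`) and `π(φ) = FW`. -/
def FiberOver {I H : Type} {Q : FinQuiver I H} {V W : MRep Q} {d : ℕ}
    {dimsV dimsW : Fin (d + 1) → I → ℕ}
    (FV : FlagVar V dimsV) (FW : FlagVar W dimsW) : Type :=
  {FU : FlagVar (prodRep V W) (fun r i => dimsV r i + dimsW r i) //
    (∀ r i, (FU.1 r i).comap (LinearMap.inl ℂ (V.M i) (W.M i)) = FV.1 r i) ∧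
    (∀ r i, (FU.1 r i).map (LinearMap.snd ℂ (V.M i) (W.M i)) = FW.1 r i)}

/-- Families of morphisms of representations `f_r : W^r → V/V^r`, `r ∈ [1;d]`, commuting
with the inclusions `W^r ⊆ W^{r+1}` and the projections `V/V^r → V/V^{r+1}`. -/
def CompatFamilies {I H : Type} {Q : FinQuiver I H} {V W : MRep Q} {d : ℕ}
    {dimsV dimsW : Fin (d + 1) → I → ℕ}
    (FV : FlagVar V dimsV) (FW : FlagVar W dimsW) : Type :=
  {f : ∀ (r : Fin (d + 1)) (i : I), (FW.1 r i) →ₗ[ℂ] (V.M i ⧸ FV.1 r i) //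
    -- each `f_r` is a morphism of representations `W^r → V/V^r`
    (∀ (r : Fin (d + 1)) (h : H),
      (Submodule.mapQ (FV.1 r (Q.src h)) (FV.1 r (Q.tgt h)) (V.map h)
          (fun x hx => FV.2.1 r h x hx)).comp (f r (Q.src h)) =
        (f r (Q.tgt h)).comp
          ((W.map h).restrict (fun x hx => FW.2.1 r h x hx))) ∧
    -- the squares over consecutive levels commute
    (∀ (r : Fin d) (i : I),
      (f r.succ i).comp
          (Submodule.inclusion (FW.2.2.1 r.castSucc r.succ
            (le_of_lt (Fin.castSucc_lt_succ (i := r))) i)) =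
        (Submodule.mapQ (FV.1 r.castSucc i) (FV.1 r.succ i) LinearMap.id
            (fun x hx => FV.2.2.1 r.castSucc r.succ
              (le_of_lt (Fin.castSucc_lt_succ (i := r))) i hx)).comp
          (f r.castSucc i))}

section Helpers
variable {M N : Type} [AddCommGroup M] [Module ℂ M] [AddCommGroup N] [Module ℂ N]
variable (A : Submodule ℂ M) (B : Submodule ℂ N)

noncomputable def graphSub (g : B →ₗ[ℂ] M ⧸ A) : Submodule ℂ (M × N) :=
  (LinearMap.ker (A.mkQ.comp (LinearMap.fst ℂ M B) - g.comp (LinearMap.snd ℂ M B))).map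
    ((LinearMap.id : M →ₗ[ℂ] M).prodMap B.subtype)

lemma mem_graphSub {g : B →ₗ[ℂ] M ⧸ A} {v : M} {w : N} :
    (v, w) ∈ graphSub A B g ↔ ∃ hb : w ∈ B, Submodule.Quotient.mk v = g ⟨w, hb⟩ := by
  constructor
  · rintro ⟨⟨v', b⟩, hk, hvw⟩
    simp only [LinearMap.prodMap_apply, LinearMap.id_apply, Prod.mk.injEq] at hvw
    obtain ⟨rfl, rfl⟩ := hvw
    refine ⟨b.2, ?_⟩
    have hk' : A.mkQ v' - g b = 0 := hk
    rw [sub_eq_zero] at hk'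
    exact hk'
  · rintro ⟨hb, h⟩
    refine ⟨(v, ⟨w, hb⟩), ?_, rfl⟩
    show A.mkQ v - g ⟨w, hb⟩ = 0
    rw [sub_eq_zero]
    exact h

lemma comap_inl_graphSub (g : B →ₗ[ℂ] M ⧸ A) :
    (graphSub A B g).comap (LinearMap.inl ℂ M N) = A := by
  ext v
  simp only [Submodule.mem_comap, LinearMap.inl_apply, mem_graphSub]
  constructor
  · rintro ⟨hb, h⟩
    rw [show (⟨(0:N), hb⟩ : B) = 0 from rfl, map_zero] at h
    exact (Submodule.Quotient.mk_eq_zero A).1 h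
  · intro hv
    exact ⟨B.zero_mem, by rw [show (⟨(0:N), B.zero_mem⟩ : B) = 0 from rfl, map_zero,
      Submodule.Quotient.mk_eq_zero]; exact hv⟩

lemma map_snd_graphSub (g : B →ₗ[ℂ] M ⧸ A) :
    (graphSub A B g).map (LinearMap.snd ℂ M N) = B := by
  ext w
  simp only [Submodule.mem_map]
  constructor
  · rintro ⟨⟨v, w'⟩, hm, rfl⟩
    exact ((mem_graphSub A B).1 hm).1
  · intro hw
    obtain ⟨v, hv⟩ := Submodule.Quotient.mk_surjective A (g ⟨w, hw⟩)
    exact ⟨(v, w), (mem_graphSub A B).2 ⟨hw, hv⟩, rfl⟩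

lemma finrank_graphSub [FiniteDimensional ℂ M] [FiniteDimensional ℂ N] (g : B →ₗ[ℂ] M ⧸ A) :
    finrank ℂ (graphSub A B g) = finrank ℂ A + finrank ℂ B := by
  classical
  set Φ := (A.mkQ.comp (LinearMap.fst ℂ M B) - g.comp (LinearMap.snd ℂ M B))
  have hinj : Function.Injective ((LinearMap.id : M →ₗ[ℂ] M).prodMap B.subtype) := by
    intro x y hxy
    simp only [LinearMap.prodMap_apply, LinearMap.id_apply, Prod.mk.injEq] at hxy
    exact Prod.ext hxy.1 (Subtype.ext hxy.2)
  have h1 : finrank ℂ (graphSub A B g) = finrank ℂ (LinearMap.ker Φ) := by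
    rw [graphSub]
    exact (Submodule.equivMapOfInjective _ hinj _).symm.finrank_eq
  have hsurj : Function.Surjective Φ := by
    intro q
    obtain ⟨v, hv⟩ := Submodule.Quotient.mk_surjective A q
    exact ⟨(v, 0), by simp [Φ, hv]⟩
  have h2 := LinearMap.finrank_range_add_finrank_ker Φ
  rw [LinearMap.range_eq_top.2 hsurj, finrank_top] at h2
  have h3 : finrank ℂ (M ⧸ A) + finrank ℂ A = finrank ℂ M :=
    Submodule.finrank_quotient_add_finrank A
  have h4 : finrank ℂ (M × B) = finrank ℂ M + finrank ℂ B := by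
    rw [finrank_prod]
  omega

variable (P : Submodule ℂ (M × N))

noncomputable def fiberProj (hB : P.map (LinearMap.snd ℂ M N) = B) : P →ₗ[ℂ] B :=
  LinearMap.codRestrict B ((LinearMap.snd ℂ M N).comp P.subtype)
    (fun p => hB ▸ Submodule.mem_map_of_mem p.2)

noncomputable def fiberPhi : P →ₗ[ℂ] M ⧸ A :=
  A.mkQ.comp ((LinearMap.fst ℂ M N).comp P.subtype)

lemma fiberProj_surjective (hB : P.map (LinearMap.snd ℂ M N) = B) :
    Function.Surjective (fiberProj B P hB) := by
  rintro ⟨w, hw⟩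
  rw [← hB] at hw
  obtain ⟨⟨v, w'⟩, hp, rfl⟩ := hw
  exact ⟨⟨(v, w'), hp⟩, rfl⟩

lemma fiber_ker_le (hA : P.comap (LinearMap.inl ℂ M N) = A)
    (hB : P.map (LinearMap.snd ℂ M N) = B) :
    LinearMap.ker (fiberProj B P hB) ≤ LinearMap.ker (fiberPhi A P) := by
  rintro ⟨⟨v, w⟩, hp⟩ hk
  have hw : w = 0 := congrArg Subtype.val (hk : fiberProj B P hB _ = 0)
  have hv : v ∈ A := by
    rw [← hA]; subst hw; exact hp
  simpa [fiberPhi, Submodule.Quotient.mk_eq_zero] using hv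

noncomputable def extractMap (hA : P.comap (LinearMap.inl ℂ M N) = A)
    (hB : P.map (LinearMap.snd ℂ M N) = B) : B →ₗ[ℂ] M ⧸ A :=
  ((LinearMap.ker (fiberProj B P hB)).liftQ (fiberPhi A P) (fiber_ker_le A B P hA hB)).comp
    ((fiberProj B P hB).quotKerEquivOfSurjective
      (fiberProj_surjective B P hB)).symm.toLinearMap

lemma extractMap_eq (hA : P.comap (LinearMap.inl ℂ M N) = A)
    (hB : P.map (LinearMap.snd ℂ M N) = B) {v : M} {w : N} (h : (v, w) ∈ P)
    (hw : w ∈ B) :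
    extractMap A B P hA hB ⟨w, hw⟩ = Submodule.Quotient.mk v := by
  set π := fiberProj B P hB with hπ
  set e := π.quotKerEquivOfSurjective (fiberProj_surjective B P hB) with he
  set p : P := ⟨(v, w), h⟩ with hp
  have h0 : e (Submodule.Quotient.mk p) = π p := rfl
  have h1 : π p = ⟨w, hw⟩ := rfl
  have h2 : e.symm ⟨w, hw⟩ = Submodule.Quotient.mk p := by
    rw [← h1, ← h0, LinearEquiv.symm_apply_apply]
  show ((LinearMap.ker π).liftQ (fiberPhi A P) (fiber_ker_le A B P hA hB))
      (e.symm ⟨w, hw⟩) = Submodule.Quotient.mk v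
  rw [h2, Submodule.liftQ_apply]
  rfl

end Helpers

section Main
variable {I H : Type} {Q : FinQuiver I H} {V W : MRep Q} {d : ℕ}
  {dimsV dimsW : Fin (d + 1) → I → ℕ} (FV : FlagVar V dimsV) (FW : FlagVar W dimsW)

lemma compat_mono (f : CompatFamilies FV FW) (i : I) (r r' : Fin (d + 1)) (hrr' : r ≤ r')
    (w : W.M i) (hw : w ∈ FW.1 r i) (v : V.M i)
    (hv : f.1 r i ⟨w, hw⟩ = Submodule.Quotient.mk v) :
    f.1 r' i ⟨w, FW.2.2.1 r r' hrr' i hw⟩ = Submodule.Quotient.mk v := by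
  revert hrr'
  induction r' using Fin.induction with
  | zero =>
    intro hrr'
    have h0 : r = 0 := le_antisymm hrr' (Fin.zero_le r)
    subst h0
    exact hv
  | succ j ih =>
    intro hrr'
    by_cases hc : r ≤ j.castSucc
    · have h1 := ih hc
      have hsq := DFunLike.congr_fun (f.2.2 j i)
        (⟨w, FW.2.2.1 r j.castSucc hc i hw⟩ : FW.1 j.castSucc i)
      rw [LinearMap.comp_apply, LinearMap.comp_apply, h1, Submodule.mapQ_apply] at hsq
      exact hsq
    · have h2 : ¬ (r : ℕ) ≤ (j : ℕ) := by
        intro h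
        exact hc (by rw [Fin.le_def, Fin.coe_castSucc]; exact h)
      have h1 := Fin.le_def.1 hrr'
      have h3 : r = j.succ := by
        apply Fin.ext
        simp only [Fin.val_succ] at h1 ⊢
        omega
      subst h3
      exact hv

noncomputable def fiberToFamily (FU : FiberOver FV FW) : CompatFamilies FV FW := by
  refine ⟨fun r i => extractMap (FV.1 r i) (FW.1 r i) (FU.1.1 r i)
      (FU.2.1 r i) (FU.2.2 r i), ?_, ?_⟩
  · intro r h
    apply LinearMap.ext
    rintro ⟨w, hw⟩
    have hw' := hw
    rw [← FU.2.2 r (Q.src h)] at hw'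
    obtain ⟨⟨v, w'⟩, hp, hww⟩ := hw'
    have hww' : w' = w := hww
    subst hww'
    have h1 := extractMap_eq (FV.1 r (Q.src h)) (FW.1 r (Q.src h)) (FU.1.1 r (Q.src h))
      (FU.2.1 r (Q.src h)) (FU.2.2 r (Q.src h)) hp hw
    have hp2 : (V.map h v, W.map h w') ∈ FU.1.1 r (Q.tgt h) := FU.1.2.1 r h (v, w') hp
    have h2 := extractMap_eq (FV.1 r (Q.tgt h)) (FW.1 r (Q.tgt h)) (FU.1.1 r (Q.tgt h))
      (FU.2.1 r (Q.tgt h)) (FU.2.2 r (Q.tgt h)) hp2 (FW.2.1 r h w' hw)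
    rw [LinearMap.comp_apply, LinearMap.comp_apply, h1, Submodule.mapQ_apply]
    exact h2.symm
  · intro r i
    apply LinearMap.ext
    rintro ⟨w, hw⟩
    have hw' := hw
    rw [← FU.2.2 r.castSucc i] at hw'
    obtain ⟨⟨v, w'⟩, hp, hww⟩ := hw'
    have hww' : w' = w := hww
    subst hww'
    have hp2 : (v, w') ∈ FU.1.1 r.succ i :=
      FU.1.2.2.1 r.castSucc r.succ (le_of_lt (Fin.castSucc_lt_succ (i := r))) i hp
    have h1 := extractMap_eq (FV.1 r.castSucc i) (FW.1 r.castSucc i) (FU.1.1 r.castSucc i)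
      (FU.2.1 r.castSucc i) (FU.2.2 r.castSucc i) hp hw
    have h2 := extractMap_eq (FV.1 r.succ i) (FW.1 r.succ i) (FU.1.1 r.succ i)
      (FU.2.1 r.succ i) (FU.2.2 r.succ i) hp2
      (FW.2.2.1 r.castSucc r.succ (le_of_lt (Fin.castSucc_lt_succ (i := r))) i hw)
    rw [LinearMap.comp_apply, LinearMap.comp_apply, h1, Submodule.mapQ_apply]
    exact h2

noncomputable def familyToFiber (f : CompatFamilies FV FW) : FiberOver FV FW := by
  refine ⟨⟨fun r i => graphSub (FV.1 r i) (FW.1 r i) (f.1 r i), ?_, ?_, ?_, ?_⟩, ?_, ?_⟩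
  · -- subrep
    rintro r h ⟨v, w⟩ hx
    obtain ⟨hb, hq⟩ := (mem_graphSub _ _).1 hx
    refine (mem_graphSub _ _).2 ⟨FW.2.1 r h w hb, ?_⟩
    have hm := DFunLike.congr_fun (f.2.1 r h) ⟨w, hb⟩
    rw [LinearMap.comp_apply, LinearMap.comp_apply, ← hq, Submodule.mapQ_apply] at hm
    exact hm
  · -- mono
    rintro r r' hrr' i ⟨v, w⟩ hx
    obtain ⟨hb, hq⟩ := (mem_graphSub _ _).1 hx
    exact (mem_graphSub _ _).2
      ⟨FW.2.2.1 r r' hrr' i hb, (compat_mono FV FW f i r r' hrr' w hb v hq.symm).symm⟩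
  · -- dims
    intro r i
    show finrank ℂ (graphSub (FV.1 r i) (FW.1 r i) (f.1 r i)) = dimsV r i + dimsW r i
    rw [finrank_graphSub, FV.2.2.2.1 r i, FW.2.2.2.1 r i]
  · -- top
    intro i
    refine eq_top_iff.2 ?_
    rintro ⟨v, w⟩ -
    have hb : w ∈ FW.1 (Fin.last d) i := by rw [FW.2.2.2.2 i]; trivial
    refine (mem_graphSub _ _).2 ⟨hb, ?_⟩
    have : Subsingleton (V.M i ⧸ FV.1 (Fin.last d) i) :=
      Submodule.Quotient.subsingleton_iff.2 (FV.2.2.2.2 i)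
    exact Subsingleton.elim _ _
  · intro r i
    exact comap_inl_graphSub _ _ _
  · intro r i
    exact map_snd_graphSub _ _ _

end Main
/-- Let `0 → V → U → W → 0` be a split short exact sequence of
representations (realized as `U = V ⊕ W`), and fix flags `(V^r)_r ∈ ℱ_𝐯(V)`,
`(W^r)_r ∈ ℱ_𝐰(W)`.  The fiber of `ℱ_{𝐯,𝐰}(U) → ℱ_𝐯(V) × ℱ_𝐰(W)`,
`φ ↦ (φ ∩ V, π(φ))`, over `((V^r), (W^r))` is in natural bijection with the set of
families of morphisms `f_r : W^r → V/V^r` of representations, `r ∈ [1;d]`, such that all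
squares formed with the inclusions `W^r → W^{r+1}` and projections `V/V^r → V/V^{r+1}`
commute. -/
theorem statement15 {I H : Type} {Q : FinQuiver I H} (V W : MRep Q) {d : ℕ}
    (dimsV dimsW : Fin (d + 1) → I → ℕ)
    (FV : FlagVar V dimsV) (FW : FlagVar W dimsW) :
    Nonempty (FiberOver FV FW ≃ CompatFamilies FV FW) := by
  refine ⟨⟨fiberToFamily FV FW, familyToFiber FV FW, ?_, ?_⟩⟩
  · -- left inverse
    intro FU
    apply Subtype.ext
    apply Subtype.ext
    funext r i
    ext x
    obtain ⟨v, w⟩ := x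
    constructor
    · intro hm
      obtain ⟨hb, hq⟩ := (mem_graphSub _ _).1 hm
      have hb' := hb
      rw [← FU.2.2 r i] at hb'
      obtain ⟨⟨v', w'⟩, hp, hww⟩ := hb'
      have hww' : w' = w := hww
      subst hww'
      have h1 := extractMap_eq (FV.1 r i) (FW.1 r i) (FU.1.1 r i)
        (FU.2.1 r i) (FU.2.2 r i) hp hb
      have hq2 : (Submodule.Quotient.mk v : V.M i ⧸ FV.1 r i) = Submodule.Quotient.mk v' := by
        rw [← h1]; exact hq
      rw [Submodule.Quotient.eq] at hq2
      have hvv : (v - v', (0 : W.M i)) ∈ FU.1.1 r i := by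
        rw [← FU.2.1 r i] at hq2
        exact hq2
      have hadd := (FU.1.1 r i).add_mem hvv hp
      have heq : ((v - v', (0 : W.M i)) + (v', w')) = (v, w') := by
        simp
      rw [← heq]; exact hadd
    · intro hm
      have hb : w ∈ FW.1 r i := by
        rw [← FU.2.2 r i]
        exact ⟨(v, w), hm, rfl⟩
      exact (mem_graphSub _ _).2
        ⟨hb, (extractMap_eq (FV.1 r i) (FW.1 r i) (FU.1.1 r i)
          (FU.2.1 r i) (FU.2.2 r i) hm hb).symm⟩
  · -- right inverse
    intro f
    apply Subtype.ext
    funext r i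
    apply LinearMap.ext
    rintro ⟨w, hw⟩
    obtain ⟨v, hv⟩ := Submodule.Quotient.mk_surjective (FV.1 r i) (f.1 r i ⟨w, hw⟩)
    have hm : (v, w) ∈ (familyToFiber FV FW f).1.1 r i :=
      (mem_graphSub (FV.1 r i) (FW.1 r i)).2 ⟨hw, hv⟩
    have hkey := extractMap_eq (FV.1 r i) (FW.1 r i) ((familyToFiber FV FW f).1.1 r i)
      ((familyToFiber FV FW f).2.1 r i) ((familyToFiber FV FW f).2.2 r i) hm hw
    exact hkey.trans hv
end
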